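/- Let G₁ = (T₁, A₁) and G₂ = (T₂, A₂) be games such that T₁, T₂, A₁ and A₂ are at most countable, and suppose G₂ is injective with respect to finite-game embeddings. If G ≤ G₁ is a finite game and f : G → G₂ is a game embedding, then f extends to a game embedding f̃ : G₁ → G₂ (that is, f̃ restricted to the tree of G equals f). -/

import Mathlib

universe u v w x y

namespace FraisseGames

/-- The initial segment (of length `n`) of an infinite sequence `R`. -/
def runPrefix {M : Type u} (R : ℕ → M) (n : ℕ) : List M :=
  (List.range n).map R

/-- `T` is a game tree over `M`: it is closed under initial segments, and every
moment of `T` has a one-step extension in `T`. -/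
def IsGameTree {M : Type u} (T : Set (List M)) : Prop :=
  (∀ t ∈ T, ∀ k : ℕ, t.take k ∈ T) ∧ ∀ t ∈ T, ∃ x : M, t ++ [x] ∈ T

/-- The set of runs of the tree `T`. -/
def Runs {M : Type u} (T : Set (List M)) : Set (ℕ → M) :=
  {R | ∀ n : ℕ, runPrefix R n ∈ T}

/-- A game over `M`: a game tree together with a payoff set of runs. -/
structure Game (M : Type u) : Type u where
  tree : Set (List M)
  isGameTree : IsGameTree tree
  payoff : Set (ℕ → M)
  payoff_subset : payoff ⊆ Runs tree

/-- A game is finite if its set of runs is finite. -/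
def Game.IsFin {M : Type u} (G : Game M) : Prop := (Runs G.tree).Finite

/-- The subgame relation `G ≤ G'`. -/
def Game.Sub {M : Type u} (G G' : Game M) : Prop :=
  G.tree ⊆ G'.tree ∧ G.payoff = G'.payoff ∩ Runs G.tree

/-- `f` is a chronological map from `T₁` to `T₂`: it maps `T₁` into `T₂` and it
preserves lengths and truncations of moments. -/
def Chronological {M₁ : Type u} {M₂ : Type v} (T₁ : Set (List M₁)) (T₂ : Set (List M₂))
    (f : List M₁ → List M₂) : Prop :=
  (∀ t ∈ T₁, f t ∈ T₂) ∧ (∀ t ∈ T₁, (f t).length = t.length) ∧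
    ∀ t ∈ T₁, ∀ k : ℕ, f (t.take k) = (f t).take k

/-- `BarMapsTo f R S` says that the map `f̄` on runs induced by the chronological
map `f` sends the run `R` to the run `S`, i.e. `S↾n = f (R↾n)` for all `n`. -/
def BarMapsTo {M₁ : Type u} {M₂ : Type v} (f : List M₁ → List M₂)
    (R : ℕ → M₁) (S : ℕ → M₂) : Prop :=
  ∀ n : ℕ, runPrefix S n = f (runPrefix R n)

/-- `f` is an A-morphism from `G₁` to `G₂`: a chronological map whose induced map on
runs sends runs won by Ali to runs won by Ali. -/
def IsAMorphism {M₁ : Type u} {M₂ : Type v} (G₁ : Game M₁) (G₂ : Game M₂)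
    (f : List M₁ → List M₂) : Prop :=
  Chronological G₁.tree G₂.tree f ∧
    ∀ R ∈ G₁.payoff, ∀ S : ℕ → M₂, BarMapsTo f R S → S ∈ G₂.payoff

/-- `f` is a game embedding from `G₁` to `G₂`: a chronological map, injective on the
tree, such that for every run `R` of `G₁`, `R ∈ A₁ ↔ f̄ R ∈ A₂`. -/
def IsGameEmbedding {M₁ : Type u} {M₂ : Type v} (G₁ : Game M₁) (G₂ : Game M₂)
    (f : List M₁ → List M₂) : Prop :=
  Chronological G₁.tree G₂.tree f ∧
    (∀ t ∈ G₁.tree, ∀ s ∈ G₁.tree, f t = f s → t = s) ∧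
    ∀ R ∈ Runs G₁.tree, ∀ S : ℕ → M₂, BarMapsTo f R S → (R ∈ G₁.payoff ↔ S ∈ G₂.payoff)

/-- `f` is an isomorphism of games from `G₁` onto `G₂`: a game embedding that is
surjective onto the tree of `G₂`. -/
def IsGameIso {M₁ : Type u} {M₂ : Type v} (G₁ : Game M₁) (G₂ : Game M₂)
    (f : List M₁ → List M₂) : Prop :=
  IsGameEmbedding G₁ G₂ f ∧ ∀ s ∈ G₂.tree, ∃ t ∈ G₁.tree, f t = s

/-- The set of eventually-zero infinite sequences of natural numbers. -/
def c00 : Set (ℕ → ℕ) := {R | ∃ N : ℕ, ∀ n ≥ N, R n = 0}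

/-- The game `G_FL = (ω^{<ω}, c₀₀)`. -/
def GFL : Game ℕ where
  tree := Set.univ
  isGameTree := ⟨fun _ _ _ => trivial, fun _ _ => ⟨0, trivial⟩⟩
  payoff := c00
  payoff_subset := fun _ _ _ => trivial

/-- A game `G` is injective with respect to game embeddings between finite games. -/
def InjWrtFinGameEmb.{u', v', w'} {N : Type w'} (G : Game N) : Prop :=
  ∀ (M : Type u') (M' : Type v') (H : Game M) (H' : Game M'),
    H.IsFin → H'.IsFin →
    ∀ e : List M → List M', IsGameEmbedding H H' e →
    ∀ f : List M → List N, IsGameEmbedding H G f →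
      ∃ g : List M' → List N, IsGameEmbedding H' G g ∧ ∀ t ∈ H.tree, g (e t) = f t

open Classical

section Basics
variable {M : Type*} {N : Type*}

lemma length_runPrefix (R : ℕ → M) (n : ℕ) : (runPrefix R n).length = n := by
  simp [runPrefix]

lemma runPrefix_zero (R : ℕ → M) : runPrefix R 0 = [] := by simp [runPrefix]

lemma runPrefix_succ (R : ℕ → M) (n : ℕ) :
    runPrefix R (n+1) = runPrefix R n ++ [R n] := by
  simp [runPrefix, List.range_succ]

lemma runPrefix_take (R : ℕ → M) (n k : ℕ) :
    (runPrefix R n).take k = runPrefix R (min k n) := by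
  simp [runPrefix, ← List.map_take, List.take_range]

lemma runPrefix_take_of_le (R : ℕ → M) {n k : ℕ} (h : k ≤ n) :
    (runPrefix R n).take k = runPrefix R k := by
  rw [runPrefix_take, min_eq_left h]

lemma runPrefix_getElem (R : ℕ → M) {n k : ℕ} (h : k < n) :
    (runPrefix R n)[k]'(by simpa [length_runPrefix] using h) = R k := by
  simp [runPrefix]

lemma runPrefix_eq_iff {R R' : ℕ → M} {n : ℕ} :
    runPrefix R n = runPrefix R' n ↔ ∀ k < n, R k = R' k := by
  constructor
  · intro h k hk
    have h1 : (runPrefix R n)[k]'(by simpa [length_runPrefix] using hk)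
        = (runPrefix R' n)[k]'(by simpa [length_runPrefix] using hk) := by
      congr 1
    rwa [runPrefix_getElem R hk, runPrefix_getElem R' hk] at h1
  · intro h
    simp only [runPrefix]
    apply List.map_congr_left
    intro a ha
    exact h a (List.mem_range.mp ha)

lemma run_ext {R S : ℕ → M} (h : ∀ m : ℕ, ∃ n ≥ m, runPrefix R n = runPrefix S n) :
    R = S := by
  funext k
  obtain ⟨n, hn, he⟩ := h (k+1)
  exact runPrefix_eq_iff.mp he k (by omega)

lemma eq_take_concat (l : List M) (n : ℕ) (h : l.length = n + 1) :
    l = l.take n ++ [l[n]'(by omega)] := by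
  conv_lhs => rw [← List.take_length (l := l), h, List.take_succ]
  congr 1
  rw [List.getElem?_eq_getElem (by omega)]
  rfl

lemma pigeon {P : ℕ → ℕ → Prop} {r : ℕ}
    (mono : ∀ i, ∀ {k k' : ℕ}, k ≤ k' → P i k' → P i k)
    (h : ∀ k, ∃ i < r, P i k) : ∃ i < r, ∀ k, P i k := by
  by_contra hc
  push_neg at hc
  have hc' : ∀ i, i < r → ∃ k, ¬ P i k := by
    intro i hi
    exact hc i hi
  let Kf : ℕ → ℕ := fun i => if h' : i < r then Classical.choose (hc' i h') else 0
  set Kmax := (Finset.range r).sup Kf with hK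
  obtain ⟨i, hir, hPi⟩ := h Kmax
  have h1 : ¬ P i (Kf i) := by
    simp only [Kf, dif_pos hir]
    exact Classical.choose_spec (hc' i hir)
  exact h1 (mono i (Finset.le_sup (f := Kf) (Finset.mem_range.mpr hir)) hPi)

end Basics
section RunThrough
variable {M : Type*}

lemma exists_run_through {T : Set (List M)} (hT : IsGameTree T) {t : List M} (ht : t ∈ T) :
    ∃ R ∈ Runs T, runPrefix R t.length = t := by
  classical
  -- one-step extension function
  let ext : List M → List M := fun s => if h : s ∈ T then s ++ [Classical.choose (hT.2 s h)] else s
  have ext_mem : ∀ s ∈ T, ext s ∈ T ∧ ∃ x, ext s = s ++ [x] := by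
    intro s hs
    refine ⟨?_, ⟨Classical.choose (hT.2 s hs), by simp [ext, dif_pos hs]⟩⟩
    simp only [ext, dif_pos hs]
    exact Classical.choose_spec (hT.2 s hs)
  let c : ℕ → List M := fun n => ext^[n] t
  have hc0 : c 0 = t := rfl
  have hcs : ∀ n, c (n+1) = ext (c n) := by
    intro n
    simp only [c, Function.iterate_succ_apply']
  have hmem : ∀ n, c n ∈ T ∧ (c n).length = t.length + n := by
    intro n
    induction n with
    | zero => exact ⟨ht, by simp [hc0]⟩
    | succ n ih =>
      obtain ⟨hm, hl⟩ := ih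
      obtain ⟨hm', x, hx⟩ := ext_mem (c n) hm
      rw [hcs n]
      exact ⟨hm', by rw [hx]; simp [hl]; omega⟩
  have htake : ∀ n, (c (n+1)).take (t.length + n) = c n := by
    intro n
    obtain ⟨hm, hl⟩ := hmem n
    obtain ⟨_, x, hx⟩ := ext_mem (c n) hm
    rw [hcs n, hx]
    rw [← hl]
    simp
  -- ladder: take of c n at t.length + j
  have htake' : ∀ j n, j ≤ n → (c n).take (t.length + j) = c j := by
    intro j n hjn
    induction n with
    | zero => 
      have : j = 0 := by omega
      subst this
      simp [hc0, (hmem 0).2]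
      
    | succ n ih =>
      rcases Nat.lt_or_ge j (n+1) with h | h
      · have hj : j ≤ n := by omega
        have h1 : (c (n+1)).take (t.length + j) = ((c (n+1)).take (t.length + n)).take (t.length + j) := by
          rw [List.take_take, min_eq_left (by omega)]
        rw [h1, htake n, ih hj]
      · have : j = n + 1 := by omega
        subst this
        simp [(hmem (n+1)).2]
  -- the run
  have hM : ∃ x : M, True := ⟨(Classical.choose (hT.2 t ht)), trivial⟩
  obtain ⟨x₀, _⟩ := hM
  let R : ℕ → M := fun k => (c (k+1)).getD k x₀
  have hpre : ∀ n, runPrefix R (t.length + n) = c n := by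
    intro n
    induction n with
    | zero =>
      -- show runPrefix R t.length = t; by entry
      rw [hc0]
      apply List.ext_getElem
      · simp [length_runPrefix]
      · intro k h1 h2
        rw [runPrefix_getElem R (by simpa [length_runPrefix] using h1)]
        simp only [R]
        have hk : k < t.length := by simpa using h2
        have h3 : (c (k+1)).take t.length = ((c (k+1)).take (t.length + k)).take t.length := by
          rw [List.take_take, min_eq_left (by omega)]
        have h4 : (c (k+1)).take (t.length + k) = c k := htake' k (k+1) (by omega)
        have h5 : (c (k+1)).take t.length = (c k).take t.length := by rw [h3, h4]
        have h6 : (c k).take t.length = t := by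
          have := htake' 0 k (by omega)
          simpa [hc0] using this
        have h7 : (c (k+1)).take t.length = t := by
          rw [h5, h6]
        have hlen : (c (k+1)).length = t.length + (k+1) := (hmem (k+1)).2
        have : (c (k+1)).getD k x₀ = (c (k+1))[k]'(by omega) := List.getD_eq_getElem _ _ (by omega)
        rw [this]
        have : t[k]'h2 = ((c (k+1)).take t.length)[k]'(by rw [h7]; exact h2) := by
          congr 1; exact h7.symm
        rw [this]
        rw [List.getElem_take]
    | succ n ih =>
      have : t.length + (n+1) = (t.length + n) + 1 := by omega
      rw [this, runPrefix_succ, ih]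
      have hlen : (c (n+1)).length = t.length + (n+1) := (hmem (n+1)).2
      have h8 := eq_take_concat (c (n+1)) (t.length + n) (by omega)
      rw [htake n] at h8
      conv_rhs => rw [h8]
      congr 1
      simp only [R]
      have hlen2 : (c (t.length + n + 1)).length = t.length + (t.length + n + 1) := (hmem _).2
      rw [List.getD_eq_getElem _ _ (by omega)]
      have h9 : (c (t.length + n + 1)).take (t.length + (n+1)) = c (n+1) :=
        htake' (n+1) (t.length + n + 1) (by omega)
      have h10 : (c (t.length+n+1))[t.length + n]'(by omega)
          = ((c (t.length + n + 1)).take (t.length + (n+1)))[t.length + n]'(by rw [h9, hlen]; omega) := by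
        rw [List.getElem_take]
      rw [h10]
      congr 1
      exact List.getElem_of_eq h9 _
  refine ⟨R, ?_, by simpa [hc0] using hpre 0⟩
  intro n
  rcases Nat.le_total n t.length with h | h
  · have h0 := hpre 0
    simp only [Nat.add_zero, hc0] at h0
    have h2 : runPrefix R n = t.take n := by
      rw [← h0, runPrefix_take_of_le R h]
    rw [h2]
    exact hT.1 t ht n
  · obtain ⟨j, hj⟩ : ∃ j, n = t.length + j := ⟨n - t.length, by omega⟩
    rw [hj, hpre j]
    exact (hmem j).1

lemma level_finite {T : Set (List M)} (hT : IsGameTree T) (hfin : (Runs T).Finite) (k : ℕ) :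
    {t ∈ T | t.length = k}.Finite := by
  classical
  rcases Set.eq_empty_or_nonempty {t ∈ T | t.length = k} with he | hne
  · rw [he]; exact Set.finite_empty
  · obtain ⟨t₀, ht₀⟩ := hne
    rcases k with _ | k
    · apply Set.Finite.subset (Set.finite_singleton ([] : List M))
      intro t ht
      simp only [Set.mem_setOf_eq] at ht
      simpa [List.length_eq_zero_iff] using ht.2
    · have hM : Nonempty M := by
        obtain ⟨hm, hl⟩ := ht₀
        cases t₀ with
        | nil => simp at hl
        | cons a _ => exact ⟨a⟩
      obtain ⟨x₀⟩ := hM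
      let F : List M → (ℕ → M) := fun t =>
        if h : t ∈ T then Classical.choose (exists_run_through hT h) else fun _ => x₀
      have hinj : Set.InjOn F {t ∈ T | t.length = k+1} := by
        intro a ha b hb hab
        obtain ⟨haT, hal⟩ := ha
        obtain ⟨hbT, hbl⟩ := hb
        have sa := Classical.choose_spec (exists_run_through hT haT)
        have sb := Classical.choose_spec (exists_run_through hT hbT)
        have ha2 : runPrefix (F a) a.length = a := by simp only [F, dif_pos haT]; exact sa.2
        have hb2 : runPrefix (F b) b.length = b := by simp only [F, dif_pos hbT]; exact sb.2
        rw [← ha2, ← hb2, hab, hal, hbl]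
      apply Set.Finite.of_finite_image _ hinj
      apply Set.Finite.subset hfin
      rintro _ ⟨t, ht, rfl⟩
      simp only [F, dif_pos ht.1]
      exact (Classical.choose_spec (exists_run_through hT ht.1)).1

end RunThrough
section Coding

universe s
variable {M₂ : Type v}

/-- The tree of prefixes of the runs `ρ 0, …, ρ (r-1)`. -/
def codeU (ρ : ℕ → ℕ → M₂) (r : ℕ) : Set (List M₂) :=
  {t | ∃ i < r, runPrefix (ρ i) t.length = t}

open Classical in
/-- Minimal index of a run having `t` as a prefix. -/
noncomputable def codeIdx (ρ : ℕ → ℕ → M₂) (r : ℕ) (t : List M₂) : ℕ :=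
  if h : ∃ i, i < r ∧ runPrefix (ρ i) t.length = t then Nat.find h else 0

/-- The coding map into lists over `ULift ℕ`. -/
noncomputable def codePsi (ρ : ℕ → ℕ → M₂) (r : ℕ) (t : List M₂) : List (ULift.{s} ℕ) :=
  (List.range t.length).map fun j => ⟨codeIdx ρ r (t.take (j+1))⟩

/-- The coded copy of the run `ρ i`. -/
noncomputable def codeRun (ρ : ℕ → ℕ → M₂) (r : ℕ) (i : ℕ) : ℕ → ULift.{s} ℕ :=
  fun k => ⟨codeIdx ρ r (runPrefix (ρ i) (k+1))⟩

open Classical in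
/-- Decoding map. -/
noncomputable def codePhi (ρ : ℕ → ℕ → M₂) (l : List (ULift.{s} ℕ)) : List M₂ :=
  if h : l = [] then [] else runPrefix (ρ (l.getLast h).down) l.length

def codeTree (ρ : ℕ → ℕ → M₂) (r : ℕ) : Set (List (ULift.{s} ℕ)) :=
  codePsi.{v, s} ρ r '' codeU ρ r

def codePayoff (ρ : ℕ → ℕ → M₂) (r : ℕ) (A₂ : Set (ℕ → M₂)) : Set (ℕ → ULift.{s} ℕ) :=
  {Q | ∃ i < r, ρ i ∈ A₂ ∧ Q = codeRun.{v, s} ρ r i}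

variable {ρ : ℕ → ℕ → M₂} {r : ℕ}

lemma codeIdx_spec {t : List M₂} (ht : t ∈ codeU ρ r) :
    codeIdx ρ r t < r ∧ runPrefix (ρ (codeIdx ρ r t)) t.length = t := by
  classical
  obtain ⟨i, hi, hpre⟩ := ht
  have h : ∃ i, i < r ∧ runPrefix (ρ i) t.length = t := ⟨i, hi, hpre⟩
  simp only [codeIdx, dif_pos h]
  exact Nat.find_spec h

lemma codeU_take {t : List M₂} (ht : t ∈ codeU ρ r) (k : ℕ) : t.take k ∈ codeU ρ r := by
  obtain ⟨i, hi, hpre⟩ := ht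
  refine ⟨i, hi, ?_⟩
  rw [List.length_take, ← hpre, runPrefix_take]
  congr 1
  rw [← hpre, length_runPrefix] 

lemma runPrefix_mem_codeU {i : ℕ} (hi : i < r) (k : ℕ) : runPrefix (ρ i) k ∈ codeU ρ r :=
  ⟨i, hi, by rw [length_runPrefix]⟩

lemma psi_length (t : List M₂) : (codePsi.{v, s} ρ r t).length = t.length := by
  simp [codePsi]

lemma psi_getElem (t : List M₂) {j : ℕ} (hj : j < t.length) :
    (codePsi.{v, s} ρ r t)[j]'(by rw [psi_length]; exact hj) = ⟨codeIdx ρ r (t.take (j+1))⟩ := by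
  simp [codePsi]

lemma psi_take (t : List M₂) (k : ℕ) :
    codePsi.{v, s} ρ r (t.take k) = (codePsi.{v, s} ρ r t).take k := by
  apply List.ext_getElem
  · simp [psi_length]
  · intro j h1 h2
    rw [psi_length, List.length_take] at h1
    rw [List.getElem_take, psi_getElem t (by omega)]
    have h3 : j < (t.take k).length := by simpa using h1
    rw [psi_getElem (t.take k) h3]
    have hjk : j + 1 ≤ k := by
      rw [List.length_take] at h3; omega
    rw [List.take_take, min_eq_left hjk]

lemma psi_runPrefix (i k : ℕ) :
    codePsi.{v, s} ρ r (runPrefix (ρ i) k) = runPrefix (codeRun.{v, s} ρ r i) k := by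
  apply List.ext_getElem
  · simp [psi_length, length_runPrefix]
  · intro j h1 h2
    rw [psi_length, length_runPrefix] at h1
    rw [psi_getElem _ (by rw [length_runPrefix]; exact h1)]
    rw [runPrefix_getElem _ (by simpa [length_runPrefix] using h2)]
    rw [runPrefix_take_of_le _ (by omega)]
    rfl

lemma phi_psi {t : List M₂} (ht : t ∈ codeU ρ r) : codePhi ρ (codePsi.{v, s} ρ r t) = t := by
  classical
  rcases List.eq_nil_or_concat t with rfl | ⟨t', a, rfl⟩
  · simp [codePhi, codePsi]
  · simp only [List.concat_eq_append] at ht ⊢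
    have hne : codePsi.{v, s} ρ r (t' ++ [a]) ≠ [] := by
      intro h
      have := psi_length.{v, s} (ρ := ρ) (r := r) (t' ++ [a])
      rw [h] at this
      simp at this
    rw [codePhi, dif_neg hne]
    have hlast : (codePsi.{v, s} ρ r (t' ++ [a])).getLast hne
        = ⟨codeIdx ρ r (t' ++ [a])⟩ := by
      rw [List.getLast_eq_getElem]
      simp only [codePsi, psi_length]
      rw [List.getElem_map, List.getElem_range]
      congr 1
      rw [List.length_append, List.length_singleton]
      rw [List.take_of_length_le (by simp)]
    rw [hlast, psi_length]
    exact (codeIdx_spec ht).2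

lemma psi_injOn {a b : List M₂} (ha : a ∈ codeU ρ r) (hb : b ∈ codeU ρ r)
    (h : codePsi.{v, s} ρ r a = codePsi.{v, s} ρ r b) : a = b := by
  rw [← phi_psi ha, ← phi_psi hb, h]

lemma codeTree_isGameTree (hr : 0 < r) : IsGameTree (codeTree.{v, s} ρ r) := by
  constructor
  · rintro _ ⟨t, ht, rfl⟩ k
    exact ⟨t.take k, codeU_take ht k, psi_take t k⟩
  · rintro _ ⟨t, ht, rfl⟩
    set i := codeIdx ρ r t with hi
    obtain ⟨hir, hpre⟩ := codeIdx_spec ht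
    set t' := runPrefix (ρ i) (t.length + 1) with ht'
    have ht'U : t' ∈ codeU ρ r := runPrefix_mem_codeU hir _
    have htake : t'.take t.length = t := by
      rw [ht', runPrefix_take_of_le _ (by omega), hpre]
    have hlen : (codePsi.{v, s} ρ r t').length = t.length + 1 := by
      rw [psi_length, ht', length_runPrefix]
    refine ⟨(codePsi.{v, s} ρ r t')[t.length]'(by omega), ?_⟩
    have := eq_take_concat (codePsi.{v, s} ρ r t') t.length hlen
    rw [← psi_take, htake] at this
    rw [← this]
    exact ⟨t', ht'U, rfl⟩

lemma codeRun_mem_runs {i : ℕ} (hi : i < r) : codeRun.{v, s} ρ r i ∈ Runs (codeTree.{v, s} ρ r) := by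
  intro n
  rw [← psi_runPrefix]
  exact ⟨runPrefix (ρ i) n, runPrefix_mem_codeU hi n, rfl⟩

lemma runs_codeTree_sub {Q : ℕ → ULift.{s} ℕ} (hQ : Q ∈ Runs (codeTree.{v, s} ρ r)) :
    ∃ i < r, Q = codeRun.{v, s} ρ r i := by
  have key : ∀ n, ∃ i < r, runPrefix Q n = runPrefix (codeRun.{v, s} ρ r i) n := by
    intro n
    obtain ⟨t, htU, hpsi⟩ := hQ n
    have hlen : t.length = n := by
      have := psi_length.{v, s} (ρ := ρ) (r := r) t
      rw [hpsi, length_runPrefix] at this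
      omega
    obtain ⟨hir, hpre⟩ := codeIdx_spec htU
    refine ⟨codeIdx ρ r t, hir, ?_⟩
    rw [← hpsi, ← psi_runPrefix, hlen] at *
    rw [← hpsi]
    congr 1
    rw [← hlen, hpre]
  obtain ⟨i, hir, hall⟩ := pigeon (P := fun i n => runPrefix Q n = runPrefix (codeRun.{v, s} ρ r i) n)
    (fun i {k k'} hkk h => by
      rw [← runPrefix_take_of_le Q hkk, ← runPrefix_take_of_le (codeRun.{v, s} ρ r i) hkk, h])
    key
  refine ⟨i, hir, ?_⟩
  apply run_ext
  intro m
  exact ⟨m, le_refl m, hall m⟩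

lemma phi_codeRun_prefix (i n : ℕ) (hi : i < r) :
    codePhi ρ (runPrefix (codeRun.{v, s} ρ r i) n) = runPrefix (ρ i) n := by
  rw [← psi_runPrefix, phi_psi (runPrefix_mem_codeU hi n)]

lemma codeRun_down (i k : ℕ) :
    (codeRun.{v, s} ρ r i k).down = codeIdx ρ r (runPrefix (ρ i) (k+1)) := rfl

lemma codeRun_down_lt {i : ℕ} (hi : i < r) (k : ℕ) : (codeRun.{v, s} ρ r i k).down < r :=
  (codeIdx_spec (runPrefix_mem_codeU hi (k+1))).1

end Coding
section Gadget

universe s s'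
variable {M₂ : Type v}

noncomputable def gadgetW (ρ : ℕ → ℕ → M₂) (r : ℕ) (v : List M₂) : ℕ → ULift.{s} ℕ :=
  fun k => (codePsi.{v, s} ρ r v).getD k ⟨r⟩

def gadgetTree (ρ : ℕ → ℕ → M₂) (r : ℕ) (v : List M₂) : Set (List (ULift.{s} ℕ)) :=
  codeTree.{v, s} ρ r ∪ {l | ∃ k > v.length, l = runPrefix (gadgetW.{v, s} ρ r v) k}

def gadgetPayoff (ρ : ℕ → ℕ → M₂) (r : ℕ) (v : List M₂) (A₂ : Set (ℕ → M₂)) :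
    Set (ℕ → ULift.{s} ℕ) :=
  codePayoff.{v, s} ρ r A₂ ∪ {gadgetW.{v, s} ρ r v}

variable {ρ : ℕ → ℕ → M₂} {r : ℕ} {v : List M₂}

lemma gadgetW_low {k : ℕ} (hk : k < v.length) :
    gadgetW.{v, s} ρ r v k = ⟨codeIdx ρ r (v.take (k+1))⟩ := by
  have h1 : k < (codePsi.{v, s} ρ r v).length := by rw [psi_length]; exact hk
  rw [gadgetW, List.getD_eq_getElem _ _ h1, psi_getElem v hk]

lemma gadgetW_high {k : ℕ} (hk : v.length ≤ k) : gadgetW.{v, s} ρ r v k = ⟨r⟩ := by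
  rw [gadgetW, List.getD_eq_default]
  rw [psi_length]; exact hk

lemma gadgetW_prefix_low {k : ℕ} (hk : k ≤ v.length) :
    runPrefix (gadgetW.{v, s} ρ r v) k = codePsi.{v, s} ρ r (v.take k) := by
  apply List.ext_getElem
  · simp [length_runPrefix, psi_length]; omega
  · intro j h1 h2
    rw [length_runPrefix] at h1
    rw [runPrefix_getElem _ h1]
    have h3 : j < (v.take k).length := by rw [List.length_take]; omega
    rw [psi_getElem _ h3, gadgetW_low (by omega), List.take_take, min_eq_left (by omega)]

lemma gadgetW_prefix_length : runPrefix (gadgetW.{v, s} ρ r v) v.length = codePsi.{v, s} ρ r v := by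
  rw [gadgetW_prefix_low (le_refl _), List.take_length]

lemma gadget_isGameTree (hr : 0 < r) (hv : v ∈ codeU ρ r) :
    IsGameTree (gadgetTree.{v, s} ρ r v) := by
  constructor
  · rintro t (ht | ⟨k, hk, rfl⟩) j
    · exact Or.inl ((codeTree_isGameTree hr).1 t ht j)
    · rw [runPrefix_take]
      rcases Nat.lt_or_ge v.length (min j k) with h | h
      · exact Or.inr ⟨min j k, h, rfl⟩
      · rw [gadgetW_prefix_low h]
        exact Or.inl ⟨v.take (min j k), codeU_take hv _, rfl⟩
  · rintro t (ht | ⟨k, hk, rfl⟩)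
    · obtain ⟨x, hx⟩ := (codeTree_isGameTree hr).2 t ht
      exact ⟨x, Or.inl hx⟩
    · refine ⟨gadgetW.{v, s} ρ r v k, Or.inr ⟨k+1, by omega, ?_⟩⟩
      rw [runPrefix_succ]

lemma gadgetW_mem_runs (hv : v ∈ codeU ρ r) :
    gadgetW.{v, s} ρ r v ∈ Runs (gadgetTree.{v, s} ρ r v) := by
  intro n
  rcases Nat.lt_or_ge v.length n with h | h
  · exact Or.inr ⟨n, h, rfl⟩
  · rw [gadgetW_prefix_low h]
    exact Or.inl ⟨v.take n, codeU_take hv _, rfl⟩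

lemma codeTree_sub_gadgetTree : codeTree.{v, s} ρ r ⊆ gadgetTree.{v, s} ρ r v :=
  Set.subset_union_left

lemma runs_gadget_sub {Q : ℕ → ULift.{s} ℕ} (hr : 0 < r)
    (hQ : Q ∈ Runs (gadgetTree.{v, s} ρ r v)) :
    (∃ i < r, Q = codeRun.{v, s} ρ r i) ∨ Q = gadgetW.{v, s} ρ r v := by
  by_cases hcof : ∀ n, ∃ m ≥ n, runPrefix Q m = runPrefix (gadgetW.{v, s} ρ r v) m
  · exact Or.inr (run_ext hcof)
  · push_neg at hcof
    obtain ⟨n₀, hn₀⟩ := hcof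
    left
    apply runs_codeTree_sub
    intro n
    have key : runPrefix Q (max n n₀) ∈ codeTree.{v, s} ρ r := by
      rcases hQ (max n n₀) with h | ⟨k, hk, hpre⟩
      · exact h
      · exfalso
        have hkm : k = max n n₀ := by
          have := congrArg List.length hpre
          simpa [length_runPrefix] using this.symm
        subst hkm
        exact hn₀ (max n n₀) (le_max_right _ _) hpre
    have : runPrefix Q n = (runPrefix Q (max n n₀)).take n := by
      rw [runPrefix_take_of_le _ (le_max_left _ _)]
    rw [this]
    exact (codeTree_isGameTree hr).1 _ key n

lemma codeRun_ne_gadgetW {i : ℕ} (hi : i < r) : codeRun.{v, s} ρ r i ≠ gadgetW.{v, s} ρ r v := by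
  intro h
  have h1 := congrArg (fun Q => (Q v.length).down) h
  rw [gadgetW_high (le_refl _)] at h1
  have h2 : (codeRun.{v, s} ρ r i v.length).down = r := h1
  have := codeRun_down_lt (ρ := ρ) hi v.length
  omega

/-- recoding between universes -/
def recode : List (ULift.{s} ℕ) → List (ULift.{s'} ℕ) := List.map fun a => ⟨a.down⟩

lemma recode_length (l : List (ULift.{s} ℕ)) : (recode.{s, s'} l).length = l.length := by
  simp [recode]

lemma recode_take (l : List (ULift.{s} ℕ)) (k : ℕ) :
    recode.{s, s'} (l.take k) = (recode.{s, s'} l).take k := by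
  simp [recode, List.map_take]

lemma recode_injective : Function.Injective (recode.{s, s'}) := by
  apply List.map_injective_iff.mpr
  intro a b h
  cases a; cases b
  simpa using h

lemma recode_psi (t : List M₂) :
    recode.{s, s'} (codePsi.{v, s} ρ r t) = codePsi.{v, s'} ρ r t := by
  simp [recode, codePsi, List.map_map, Function.comp]

lemma recode_runPrefix_codeRun (i k : ℕ) :
    recode.{s, s'} (runPrefix (codeRun.{v, s} ρ r i) k) = runPrefix (codeRun.{v, s'} ρ r i) k := by
  rw [← psi_runPrefix, recode_psi, psi_runPrefix]

lemma codeRun_transfer {i j : ℕ} (h : codeRun.{v, s} ρ r i = codeRun.{v, s} ρ r j) :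
    codeRun.{v, s'} ρ r i = codeRun.{v, s'} ρ r j := by
  funext k
  have h1 := congrArg (fun Q => (Q k).down) h
  simp only [codeRun_down] at h1
  simp only [codeRun, h1]

end Gadget
section Rich

variable {M₂ : Type v}

lemma runs_mono {T T' : Set (List M₂)} (h : T ⊆ T') : Runs T ⊆ Runs T' :=
  fun _ hR n => h (hR n)

lemma root_mem {G₂ : Game M₂} (hinj : InjWrtFinGameEmb.{x, y, v} G₂) :
    ([] : List M₂) ∈ G₂.tree := by
  classical
  let H : Game (ULift.{x} ℕ) :=
    ⟨∅, ⟨fun t ht => absurd ht (Set.notMem_empty t), fun t ht => absurd ht (Set.notMem_empty t)⟩,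
      ∅, fun R hR => absurd hR (Set.notMem_empty R)⟩
  let Z : ℕ → ULift.{y} ℕ := fun _ => ⟨0⟩
  let H' : Game (ULift.{y} ℕ) :=
    ⟨{l | ∃ k, l = runPrefix Z k},
     ⟨by rintro t ⟨k, rfl⟩ j; exact ⟨min j k, (runPrefix_take Z k j)⟩,
      by rintro t ⟨k, rfl⟩; exact ⟨Z k, ⟨k+1, (runPrefix_succ Z k).symm⟩⟩⟩,
     ∅, fun R hR => absurd hR (Set.notMem_empty R)⟩
  have hfinH : H.IsFin := by
    have : Runs (∅ : Set (List (ULift.{x} ℕ))) = ∅ := by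
      ext R
      simp only [Set.mem_empty_iff_false, iff_false]
      intro hR
      exact absurd (hR 0) (Set.notMem_empty _)
    show (Runs H.tree).Finite
    show (Runs ∅).Finite
    rw [this]
    exact Set.finite_empty
  have hfinH' : H'.IsFin := by
    apply Set.Finite.subset (Set.finite_singleton Z)
    intro R hR
    simp only [Set.mem_singleton_iff]
    apply run_ext
    intro m
    refine ⟨m, le_refl m, ?_⟩
    obtain ⟨k, hk⟩ := hR m
    have : k = m := by
      have := congrArg List.length hk
      simpa [length_runPrefix] using this.symm
    rw [hk, this]
  have hvac : ∀ R, R ∈ Runs (∅ : Set (List (ULift.{x} ℕ))) → False := by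
    intro R hR
    exact absurd (hR 0) (Set.notMem_empty _)
  have he : IsGameEmbedding H H' (recode.{x, y}) := by
    refine ⟨⟨?_, ?_, ?_⟩, ?_, ?_⟩ <;>
      first
        | (intro t ht; exact absurd ht (Set.notMem_empty t))
        | (intro R hR; exact absurd (hR 0) (Set.notMem_empty _))
  have hφ : IsGameEmbedding H G₂ (fun _ => ([] : List M₂)) := by
    refine ⟨⟨?_, ?_, ?_⟩, ?_, ?_⟩ <;>
      first
        | (intro t ht; exact absurd ht (Set.notMem_empty t))
        | (intro R hR; exact absurd (hR 0) (Set.notMem_empty _))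
  obtain ⟨g, hg, _⟩ := hinj _ _ H H' hfinH hfinH' recode.{x, y} he _ hφ
  have h0 : ([] : List (ULift.{y} ℕ)) ∈ H'.tree := ⟨0, by rw [runPrefix_zero]⟩
  have hmem := hg.1.1 [] h0
  have hlen := hg.1.2.1 [] h0
  simp only [List.length_nil] at hlen
  rwa [List.length_eq_zero_iff.mp hlen] at hmem

lemma rich_step {G₂ : Game M₂} (hinj : InjWrtFinGameEmb.{x, y, v} G₂)
    {v : List M₂} (hv : v ∈ G₂.tree) {F : Set (List M₂)} (hFfin : F.Finite)
    (hFT : F ⊆ G₂.tree) :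
    ∃ c : List M₂, c.length = v.length + 1 ∧ c.take v.length = v ∧ c ∈ G₂.tree ∧ c ∉ F ∧
      ∃ S ∈ G₂.payoff, runPrefix S (v.length + 1) = c := by
  classical
  set T₂ := G₂.tree with hT₂
  set A₂ := G₂.payoff with hA₂
  let L : List (List M₂) := v :: hFfin.toFinset.toList
  have hLmem : ∀ w ∈ L, w ∈ T₂ := by
    intro w hw
    rcases List.mem_cons.mp hw with rfl | hw'
    · exact hv
    · exact hFT (by rwa [← Set.Finite.mem_toFinset hFfin, ← Finset.mem_toList])
  set r := L.length with hrdef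
  have hr : 0 < r := by simp [hrdef, L]
  have hgetD : ∀ i, L.getD i v ∈ T₂ := by
    intro i
    rcases Nat.lt_or_ge i r with h | h
    · rw [List.getD_eq_getElem L v h]
      exact hLmem _ (List.getElem_mem h)
    · rw [List.getD_eq_default L v h]
      exact hv
  let ρ : ℕ → ℕ → M₂ := fun i => Classical.choose (exists_run_through G₂.isGameTree (hgetD i))
  have hρ : ∀ i, ρ i ∈ Runs T₂ ∧ runPrefix (ρ i) (L.getD i v).length = L.getD i v :=
    fun i => Classical.choose_spec (exists_run_through G₂.isGameTree (hgetD i))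
  have hLU : ∀ w ∈ L, w ∈ codeU ρ r := by
    intro w hw
    obtain ⟨i, hir, hgi⟩ := List.mem_iff_getElem.mp hw
    refine ⟨i, hir, ?_⟩
    have : L.getD i v = w := by rw [List.getD_eq_getElem L v hir, hgi]
    rw [← this]
    exact (hρ i).2
  have hvU : v ∈ codeU ρ r := hLU v List.mem_cons_self
  have hFU : ∀ w ∈ F, w ∈ codeU ρ r := by
    intro w hw
    apply hLU
    apply List.mem_cons_of_mem
    rw [Finset.mem_toList, Set.Finite.mem_toFinset hFfin]
    exact hw
  have hUT : codeU ρ r ⊆ T₂ := by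
    rintro t ⟨i, hir, hpre⟩
    rw [← hpre]
    exact (hρ i).1 t.length
  -- the two finite games
  let H : Game (ULift.{x} ℕ) :=
    ⟨codeTree.{v, x} ρ r, codeTree_isGameTree hr, codePayoff.{v, x} ρ r A₂, by
      rintro Q ⟨i, hir, _, rfl⟩
      exact codeRun_mem_runs hir⟩
  let H' : Game (ULift.{y} ℕ) :=
    ⟨gadgetTree.{v, y} ρ r v, gadget_isGameTree hr hvU, gadgetPayoff.{v, y} ρ r v A₂, by
      rintro Q (⟨i, hir, _, rfl⟩ | hQ)
      · exact runs_mono codeTree_sub_gadgetTree (codeRun_mem_runs hir)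
      · rw [Set.mem_singleton_iff] at hQ
        rw [hQ]
        exact gadgetW_mem_runs hvU⟩
  have hfinH : H.IsFin := by
    apply Set.Finite.subset ((Set.finite_Iio r).image (codeRun.{v, x} ρ r))
    intro Q hQ
    obtain ⟨i, hir, rfl⟩ := runs_codeTree_sub hQ
    exact ⟨i, hir, rfl⟩
  have hfinH' : H'.IsFin := by
    apply Set.Finite.subset
      (((Set.finite_Iio r).image (codeRun.{v, y} ρ r)).union
        (Set.finite_singleton (gadgetW.{v, y} ρ r v)))
    intro Q hQ
    rcases runs_gadget_sub hr hQ with ⟨i, hir, rfl⟩ | rfl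
    · exact Or.inl ⟨i, hir, rfl⟩
    · exact Or.inr rfl
  -- the embedding e : H → H'
  have he : IsGameEmbedding H H' (recode.{x, y}) := by
    refine ⟨⟨?_, ?_, ?_⟩, ?_, ?_⟩
    · rintro l ⟨t, htU, rfl⟩
      rw [recode_psi]
      exact codeTree_sub_gadgetTree ⟨t, htU, rfl⟩
    · intro l _; exact recode_length l
    · intro l _ k; exact recode_take l k
    · intro t _ s _ h; exact recode_injective h
    · intro R hR S hBar
      obtain ⟨i, hir, rfl⟩ := runs_codeTree_sub hR
      have hS : S = codeRun.{v, y} ρ r i := by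
        apply run_ext
        intro m
        refine ⟨m, le_refl m, ?_⟩
        rw [hBar m, recode_runPrefix_codeRun]
      subst hS
      constructor
      · rintro ⟨j, hjr, hjA, hij⟩
        exact Or.inl ⟨j, hjr, hjA, codeRun_transfer hij⟩
      · rintro (⟨j, hjr, hjA, hij⟩ | hW)
        · exact ⟨j, hjr, hjA, codeRun_transfer hij⟩
        · rw [Set.mem_singleton_iff] at hW
          exact absurd hW (codeRun_ne_gadgetW hir)
  -- the embedding φ : H → G₂
  have hφ : IsGameEmbedding H G₂ (codePhi.{v, x} ρ) := by
    refine ⟨⟨?_, ?_, ?_⟩, ?_, ?_⟩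
    · rintro l ⟨t, htU, rfl⟩
      rw [phi_psi htU]
      exact hUT htU
    · rintro l ⟨t, htU, rfl⟩
      rw [phi_psi htU, psi_length]
    · rintro l ⟨t, htU, rfl⟩ k
      rw [← psi_take, phi_psi htU, phi_psi (codeU_take htU k)]
    · rintro a ⟨ta, hta, rfl⟩ b ⟨tb, htb, rfl⟩ h
      rw [phi_psi hta, phi_psi htb] at h
      rw [h]
    · intro R hR S hBar
      obtain ⟨i, hir, rfl⟩ := runs_codeTree_sub hR
      have hS : S = ρ i := by
        apply run_ext
        intro m
        refine ⟨m, le_refl m, ?_⟩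
        rw [hBar m, phi_codeRun_prefix _ _ hir]
      subst hS
      constructor
      · rintro ⟨j, hjr, hjA, hij⟩
        have : ρ i = ρ j := by
          apply run_ext
          intro m
          refine ⟨m, le_refl m, ?_⟩
          rw [← phi_codeRun_prefix (r := r) i m hir, ← phi_codeRun_prefix (r := r) j m hjr, hij]
        rwa [this]
      · intro hA
        exact ⟨i, hir, hA, rfl⟩
  obtain ⟨g, hg, hcomp⟩ := hinj _ _ H H' hfinH hfinH' recode.{x, y} he (codePhi.{v, x} ρ) hφ
  have hgψ : ∀ t, t ∈ codeU ρ r → g (codePsi.{v, y} ρ r t) = t := by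
    intro t ht
    have := hcomp (codePsi.{v, x} ρ r t) ⟨t, ht, rfl⟩
    rwa [recode_psi, phi_psi ht] at this
  set W := gadgetW.{v, y} ρ r v with hW
  have hWtree : ∀ n, runPrefix W n ∈ H'.tree := gadgetW_mem_runs hvU
  set node := runPrefix W (v.length + 1) with hnodedef
  have hnode : node ∈ H'.tree := hWtree _
  set c := g node with hc
  have hclen : c.length = v.length + 1 := by
    rw [hc, hg.1.2.1 node hnode, hnodedef, length_runPrefix]
  have hctake : c.take v.length = v := by
    have h1 := hg.1.2.2 node hnode v.length
    rw [hnodedef, runPrefix_take_of_le _ (by omega), gadgetW_prefix_length, hgψ v hvU] at h1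
    rw [hc, ← h1]
  have hcT : c ∈ T₂ := hg.1.1 node hnode
  have hcF : c ∉ F := by
    intro hcF
    have hcU : c ∈ codeU ρ r := hFU c hcF
    have h1 : g (codePsi.{v, y} ρ r c) = g node := by rw [hgψ c hcU, hc]
    have h2 : codePsi.{v, y} ρ r c = node :=
      hg.2.1 _ (codeTree_sub_gadgetTree ⟨c, hcU, rfl⟩) node hnode h1
    have h3 : (codePsi.{v, y} ρ r c)[v.length]'(by rw [psi_length, hclen]; omega)
        = ⟨codeIdx ρ r c⟩ := by
      rw [psi_getElem c (by omega)]
      congr 2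
      rw [← hclen, List.take_length]
    have h4 : node[v.length]'(by rw [hnodedef, length_runPrefix]; omega)
        = (⟨r⟩ : ULift.{y} ℕ) := by
      have h4' : (runPrefix W (v.length + 1))[v.length]'(by rw [length_runPrefix]; omega)
          = W v.length := runPrefix_getElem _ (by omega)
      have h5 : W v.length = (⟨r⟩ : ULift.{y} ℕ) := gadgetW_high (le_refl _)
      rw [h5] at h4'
      exact h4'
    have h5 := (codeIdx_spec hcU).1
    have h6 : (⟨codeIdx ρ r c⟩ : ULift.{y} ℕ) = ⟨r⟩ := by
      rw [← h3, ← h4]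
      exact List.getElem_of_eq h2 _
    have h7 : codeIdx ρ r c = r := congrArg ULift.down h6
    omega
  -- the winning run through c
  have hz : Nonempty M₂ := by
    rcases c with _ | ⟨a, c'⟩
    · simp at hclen
    · exact ⟨a⟩
  obtain ⟨z⟩ := hz
  set S : ℕ → M₂ := fun n => (g (runPrefix W (n+1))).getD n z with hSdef
  have hglen : ∀ n, (g (runPrefix W n)).length = n := by
    intro n
    rw [hg.1.2.1 _ (hWtree n), length_runPrefix]
  have hbar : BarMapsTo g W S := by
    intro n
    induction n with
    | zero =>
      have h1 := hg.1.2.2 (runPrefix W 1) (hWtree 1) 0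
      rw [runPrefix_take_of_le _ (by omega), runPrefix_zero, List.take_zero] at h1
      rw [runPrefix_zero, runPrefix_zero, h1]
    | succ n ih =>
      rw [runPrefix_succ, ih]
      have h1 := hg.1.2.2 (runPrefix W (n+1)) (hWtree (n+1)) n
      rw [runPrefix_take_of_le _ (by omega)] at h1
      have h2 := eq_take_concat (g (runPrefix W (n+1))) n (hglen (n+1))
      conv_rhs => rw [h2]
      rw [← h1]
      congr 1
      rw [hSdef]
      simp only
      rw [List.getD_eq_getElem _ _ (by rw [hglen]; omega)]
  have hWpay : W ∈ H'.payoff := Or.inr rfl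
  have hWruns : W ∈ Runs H'.tree := gadgetW_mem_runs hvU
  have hSpay : S ∈ A₂ := (hg.2.2 W hWruns S hbar).mp hWpay
  have hSpre : runPrefix S (v.length + 1) = c := by
    rw [hbar (v.length + 1), ← hnodedef, ← hc]
  exact ⟨c, hclen, hctake, hcT, hcF, S, hSpay, hSpre⟩

end Rich
section Build

variable {M₁ : Type u} {M₂ : Type v}

open Classical in
noncomputable def buildLv (treeG : Set (List M₁)) (f : List M₁ → List M₂)
    (Mk : List M₁ → Prop) (pick : ∀ t, Mk t → (ℕ → M₁)) (nn : (ℕ → M₁) → ℕ)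
    (Sig : List M₂ → ℕ → M₂)
    (dflt : (List M₁ → List M₂) → List M₁ → List M₂) : ℕ → List M₁ → List M₂
  | 0 => fun _ => []
  | (k+1) => fun t =>
    if t.length ≤ k then buildLv treeG f Mk pick nn Sig dflt k t
    else if t ∈ treeG then f t
    else if h : Mk t then
      runPrefix (Sig (buildLv treeG f Mk pick nn Sig dflt k (t.take (nn (pick t h))))) t.length
    else dflt (buildLv treeG f Mk pick nn Sig dflt k) t

lemma buildLv_zero (treeG : Set (List M₁)) (f : List M₁ → List M₂) (Mk pick nn Sig dflt)
    (t : List M₁) : buildLv treeG f Mk pick nn Sig dflt 0 t = [] := rfl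

open Classical in
lemma buildLv_succ (treeG : Set (List M₁)) (f : List M₁ → List M₂) (Mk pick nn Sig dflt)
    (k : ℕ) (t : List M₁) :
    buildLv treeG f Mk pick nn Sig dflt (k+1) t =
      if t.length ≤ k then buildLv treeG f Mk pick nn Sig dflt k t
      else if t ∈ treeG then f t
      else if h : Mk t then
        runPrefix (Sig (buildLv treeG f Mk pick nn Sig dflt k (t.take (nn (pick t h))))) t.length
      else dflt (buildLv treeG f Mk pick nn Sig dflt k) t := rfl

noncomputable def chSt (next : Set (List M₂) → List M₂) (F : Set (List M₂)) :
    ℕ → Set (List M₂)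
  | 0 => F
  | (n+1) => chSt next F n ∪ {next (chSt next F n)}

noncomputable def chSeq (next : Set (List M₂) → List M₂) (F : Set (List M₂)) (n : ℕ) :
    List M₂ :=
  next (chSt next F n)

lemma chSt_mono (next : Set (List M₂) → List M₂) (F : Set (List M₂)) {m n : ℕ} (h : m ≤ n) :
    chSt next F m ⊆ chSt next F n := by
  induction n with
  | zero => have : m = 0 := by omega
            subst this; exact subset_rfl
  | succ n ih =>
    rcases Nat.lt_or_ge m (n+1) with h' | h'
    · exact (ih (by omega)).trans Set.subset_union_left
    · have : m = n+1 := by omega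
      subst this; exact subset_rfl

lemma chSt_base (next : Set (List M₂) → List M₂) (F : Set (List M₂)) (n : ℕ) :
    F ⊆ chSt next F n := chSt_mono next F (Nat.zero_le n)

lemma chSeq_mem_chSt (next : Set (List M₂) → List M₂) (F : Set (List M₂)) (n : ℕ) :
    chSeq next F n ∈ chSt next F (n+1) := Or.inr rfl

end Build
/-- embeddings of finite subgames into a countable game that is
injective w.r.t. finite-game embeddings extend to the whole countable game. -/
theorem embedding_extends_of_injective {M₁ : Type u} {M₂ : Type v}
    (G₁ : Game M₁) (G₂ : Game M₂)
    (hT₁ : G₁.tree.Countable) (hT₂ : G₂.tree.Countable)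
    (hA₁ : G₁.payoff.Countable) (hA₂ : G₂.payoff.Countable)
    (hinj : InjWrtFinGameEmb.{x, y, v} G₂)
    (G : Game M₁) (hGfin : G.IsFin) (hle : G.Sub G₁)
    (f : List M₁ → List M₂) (hf : IsGameEmbedding G G₂ f) :
    ∃ ftil : List M₁ → List M₂, IsGameEmbedding G₁ G₂ ftil ∧
      ∀ t ∈ G.tree, ftil t = f t := by
  classical
  -- trivial case: empty tree
  by_cases hT1e : ([] : List M₁) ∈ G₁.tree
  case neg =>
    have hno : ∀ t, t ∉ G₁.tree := by
      intro t ht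
      exact hT1e (by simpa using G₁.isGameTree.1 t ht 0)
    refine ⟨f, ⟨⟨?_, ?_, ?_⟩, ?_, ?_⟩, ?_⟩
    · intro t ht; exact absurd ht (hno t)
    · intro t ht; exact absurd ht (hno t)
    · intro t ht; exact absurd ht (hno t)
    · intro t ht; exact absurd ht (hno t)
    · intro R hR; exact absurd (hR 0) (hno _)
    · intro t _; rfl
  case pos =>
  have htreeG_sub : G.tree ⊆ G₁.tree := hle.1
  have hpayG : G.payoff = G₁.payoff ∩ Runs G.tree := hle.2
  have hroot2 : ([] : List M₂) ∈ G₂.tree := root_mem hinj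
  -- enumeration of the payoff of G₂
  have hA₂ne : ∃ S, S ∈ G₂.payoff := by
    obtain ⟨c, _, _, _, _, S, hS, _⟩ :=
      rich_step hinj hroot2 Set.finite_empty (Set.empty_subset _)
    exact ⟨S, hS⟩
  obtain ⟨S0, hS0⟩ := hA₂ne
  obtain ⟨sA₂, hsA₂⟩ := Set.Countable.exists_eq_range hA₂ ⟨S0, hS0⟩
  have hsA₂mem : ∀ m, sA₂ m ∈ G₂.payoff := fun m => by rw [hsA₂]; exact ⟨m, rfl⟩
  have hsA₂all : ∀ S ∈ G₂.payoff, ∃ m, S = sA₂ m := by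
    intro S hS
    rw [hsA₂] at hS
    obtain ⟨m, hm⟩ := hS
    exact ⟨m, hm.symm⟩
  -- rank function on the tree of G₁
  obtain ⟨ι₁, hι₁⟩ := Set.countable_iff_exists_injective.mp hT₁
  set rank : List M₁ → ℕ := fun t => if h : t ∈ G₁.tree then ι₁ ⟨t, h⟩ else 0 with hrankdef
  have hrankInj : ∀ t ∈ G₁.tree, ∀ s ∈ G₁.tree, rank t = rank s → t = s := by
    intro t ht s hs h
    simp only [hrankdef, dif_pos ht, dif_pos hs] at h
    have := hι₁ h
    exact congrArg Subtype.val this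
  -- designated runs
  set Des : Set (ℕ → M₁) := {R | R ∈ G₁.payoff ∧ R ∉ Runs G.tree} with hDesdef
  have hDesCount : Des.Countable := hA₁.mono (fun R hR => hR.1)
  obtain ⟨ιD, hιD⟩ := Set.countable_iff_exists_injective.mp hDesCount
  set ι' : (ℕ → M₁) → ℕ := fun R => if h : R ∈ Des then ιD ⟨R, h⟩ else 0 with hι'def
  have hι'inj : ∀ R ∈ Des, ∀ R' ∈ Des, ι' R = ι' R' → R = R' := by
    intro R hR R' hR' h
    simp only [hι'def, dif_pos hR, dif_pos hR'] at h
    exact congrArg Subtype.val (hιD h)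
  -- first difference of two runs
  set dd : (ℕ → M₁) → (ℕ → M₁) → ℕ :=
    fun R R' => if h : ∃ k, R k ≠ R' k then Nat.find h else 0 with hdddef
  have hdd : ∀ R R' : ℕ → M₁, R ≠ R' → R (dd R R') ≠ R' (dd R R') := by
    intro R R' h
    have hex : ∃ k, R k ≠ R' k := Function.ne_iff.mp h
    simp only [hdddef, dif_pos hex]
    exact Nat.find_spec hex
  have hdd_min : ∀ (R R' : ℕ → M₁) (j : ℕ), j < dd R R' → R j = R' j := by
    intro R R' j hj
    by_cases hex : ∃ k, R k ≠ R' k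
    · simp only [hdddef, dif_pos hex] at hj
      have := Nat.find_min hex hj
      simpa using this
    · simp only [hdddef, dif_neg hex] at hj
      omega
  have hagree_dd : ∀ (R R' : ℕ → M₁) (m : ℕ), R ≠ R' → runPrefix R m = runPrefix R' m → m ≤ dd R R' := by
    intro R R' m hne hpre
    by_contra hc
    push_neg at hc
    exact hdd R R' hne (runPrefix_eq_iff.mp hpre _ hc)
  -- exit level from the tree of G
  set dG : (ℕ → M₁) → ℕ :=
    fun R => if h : ∃ m, runPrefix R m ∉ G.tree then Nat.find h else 0 with hdGdef
  have hdG : ∀ R ∈ Des, ∀ k, dG R ≤ k → runPrefix R k ∉ G.tree := by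
    intro R hR k hk hmem
    have hex : ∃ m, runPrefix R m ∉ G.tree := by
      by_contra hc
      push_neg at hc
      exact hR.2 hc
    have h1 : runPrefix R (dG R) ∈ G.tree := by
      have := G.isGameTree.1 _ hmem (dG R)
      rwa [runPrefix_take_of_le _ hk] at this
    have h2 : runPrefix R (dG R) ∉ G.tree := by
      simp only [hdGdef, dif_pos hex]
      exact Nat.find_spec hex
    exact h2 h1
  -- the marker level
  have hEfin : ∀ R, {R' | R' ∈ Des ∧ R' ≠ R ∧ ι' R' < ι' R}.Finite := by
    intro R
    apply Set.Finite.of_finite_image (f := ι')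
    · apply Set.Finite.subset (Set.finite_Iio (ι' R))
      rintro _ ⟨R', hR', rfl⟩
      exact hR'.2.2
    · intro a ha b hb hab
      exact hι'inj a ha.1 b hb.1 hab
  set nn : (ℕ → M₁) → ℕ := fun R => dG R + (hEfin R).toFinset.sup (dd R) + 1 with hnndef
  have hnn_dG : ∀ R, dG R < nn R := by
    intro R
    simp only [hnndef]
    omega
  have hnn_dd : ∀ R R' : ℕ → M₁, R' ∈ Des → R' ≠ R → ι' R' < ι' R → dd R R' < nn R := by
    intro R R' h1 h2 h3
    have hmem : R' ∈ (hEfin R).toFinset := by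
      rw [Set.Finite.mem_toFinset]
      exact ⟨h1, h2, h3⟩
    have := Finset.le_sup (f := dd R) hmem
    simp only [hnndef]
    omega
  -- key uniqueness of designated runs with long agreement
  have huniq : ∀ R ∈ Des, ∀ R' ∈ Des, ∀ m : ℕ, nn R ≤ m → nn R' ≤ m →
      runPrefix R m = runPrefix R' m → R = R' := by
    intro R hR R' hR' m h1 h2 h3
    by_contra hne
    have hne' : R' ≠ R := fun h => hne h.symm
    have hιne : ι' R ≠ ι' R' := fun h => hne (hι'inj R hR R' hR' h)
    rcases Nat.lt_or_ge (ι' R) (ι' R') with hlt | hge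
    · have h4 : dd R' R < nn R' := hnn_dd R' R hR hne hlt
      have h5 := hdd R' R hne'
      have h6 := runPrefix_eq_iff.mp h3 (dd R' R) (by omega)
      exact h5 h6.symm
    · have hlt' : ι' R' < ι' R := by omega
      have h4 : dd R R' < nn R := hnn_dd R R' hR' hne' hlt'
      have h5 := hdd R R' hne
      have h6 := runPrefix_eq_iff.mp h3 (dd R R') (by omega)
      exact h5 h6
  -- marked nodes
  set Mk : List M₁ → Prop :=
    fun t => ∃ R, R ∈ Des ∧ runPrefix R t.length = t ∧ nn R + 1 ≤ t.length with hMkdef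
  set pick : ∀ t, Mk t → (ℕ → M₁) := fun t h => Classical.choose h with hpickdef
  have hpick : ∀ t (h : Mk t), (pick t h) ∈ Des ∧ runPrefix (pick t h) t.length = t ∧
      nn (pick t h) + 1 ≤ t.length := fun t h => Classical.choose_spec h
  have hpick_eq : ∀ t (h : Mk t), ∀ R ∈ Des, runPrefix R t.length = t →
      nn R + 1 ≤ t.length → pick t h = R := by
    intro t h R hR hpre hlen
    obtain ⟨h1, h2, h3⟩ := hpick t h
    exact huniq _ h1 _ hR t.length (by omega) (by omega) (by rw [h2, hpre])
  -- the designated image runs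
  have hsig_ex : ∀ w : List M₂, w ∈ G₂.tree →
      ∃ S, S ∈ G₂.payoff ∧ runPrefix S w.length = w := by
    intro w hw
    obtain ⟨c, hclen, hctake, _, _, S, hS, hSpre⟩ :=
      rich_step hinj hw Set.finite_empty (Set.empty_subset _)
    refine ⟨S, hS, ?_⟩
    have h1 : runPrefix S w.length = (runPrefix S (w.length+1)).take w.length :=
      (runPrefix_take_of_le _ (by omega)).symm
    rw [h1, hSpre, hctake]
  set Sig : List M₂ → ℕ → M₂ :=
    fun w => if h : w ∈ G₂.tree then Classical.choose (hsig_ex w h) else sA₂ 0 with hSigdef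
  have hSigA : ∀ w, Sig w ∈ G₂.payoff := by
    intro w
    by_cases h : w ∈ G₂.tree
    · simp only [hSigdef, dif_pos h]
      exact (Classical.choose_spec (hsig_ex w h)).1
    · simp only [hSigdef, dif_neg h]
      exact hsA₂mem 0
  have hSigpre : ∀ w ∈ G₂.tree, runPrefix (Sig w) w.length = w := by
    intro w h
    simp only [hSigdef, dif_pos h]
    exact (Classical.choose_spec (hsig_ex w h)).2
  -- fresh children
  have hnext_ex : ∀ w (Fs : Set (List M₂)), w ∈ G₂.tree → Fs.Finite → Fs ⊆ G₂.tree →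
      ∃ c : List M₂, c.length = w.length + 1 ∧ c.take w.length = w ∧ c ∈ G₂.tree ∧ c ∉ Fs := by
    intro w Fs hw hFin hFT
    obtain ⟨c, h1, h2, h3, h4, _⟩ := rich_step hinj hw hFin hFT
    exact ⟨c, h1, h2, h3, h4⟩
  set nextCh : List M₂ → Set (List M₂) → List M₂ := fun w Fs =>
    if h : w ∈ G₂.tree ∧ Fs.Finite ∧ Fs ⊆ G₂.tree then
      Classical.choose (hnext_ex w Fs h.1 h.2.1 h.2.2) else w with hnextChdef
  have hnextCh : ∀ w (Fs : Set (List M₂)), w ∈ G₂.tree → Fs.Finite → Fs ⊆ G₂.tree →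
      (nextCh w Fs).length = w.length + 1 ∧ (nextCh w Fs).take w.length = w ∧
        nextCh w Fs ∈ G₂.tree ∧ nextCh w Fs ∉ Fs := by
    intro w Fs hw hFin hFT
    have h : w ∈ G₂.tree ∧ Fs.Finite ∧ Fs ⊆ G₂.tree := ⟨hw, hFin, hFT⟩
    simp only [hnextChdef, dif_pos h]
    exact Classical.choose_spec (hnext_ex w Fs h.1 h.2.1 h.2.2)
  -- chains of fresh children
  have hchSt : ∀ w ∈ G₂.tree, ∀ F0 : Set (List M₂), F0.Finite → F0 ⊆ G₂.tree → ∀ n,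
      (chSt (nextCh w) F0 n).Finite ∧ chSt (nextCh w) F0 n ⊆ G₂.tree := by
    intro w hw F0 h1 h2 n
    induction n with
    | zero => exact ⟨h1, h2⟩
    | succ n ih =>
      obtain ⟨ha, hb⟩ := ih
      obtain ⟨_, _, hc, _⟩ := hnextCh w _ hw ha hb
      constructor
      · exact ha.union (Set.finite_singleton _)
      · rintro l (hl | hl)
        · exact hb hl
        · rw [Set.mem_singleton_iff] at hl
          rw [hl]
          exact hc
  have hchSeq : ∀ w ∈ G₂.tree, ∀ F0 : Set (List M₂), F0.Finite → F0 ⊆ G₂.tree → ∀ n,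
      (chSeq (nextCh w) F0 n).length = w.length + 1 ∧
        (chSeq (nextCh w) F0 n).take w.length = w ∧
        chSeq (nextCh w) F0 n ∈ G₂.tree ∧ chSeq (nextCh w) F0 n ∉ chSt (nextCh w) F0 n := by
    intro w hw F0 h1 h2 n
    obtain ⟨ha, hb⟩ := hchSt w hw F0 h1 h2 n
    exact hnextCh w _ hw ha hb
  have hchSeqInj : ∀ w ∈ G₂.tree, ∀ F0 : Set (List M₂), F0.Finite → F0 ⊆ G₂.tree →
      ∀ m n, chSeq (nextCh w) F0 m = chSeq (nextCh w) F0 n → m = n := by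
    intro w hw F0 h1 h2 m n hmn
    by_contra hne
    wlog hlt : m < n generalizing m n
    · exact this n m hmn.symm (fun h => hne h.symm) (by omega)
    · have ha : chSeq (nextCh w) F0 m ∈ chSt (nextCh w) F0 n :=
        chSt_mono _ _ hlt (chSeq_mem_chSt _ _ m)
      rw [hmn] at ha
      exact (hchSeq w hw F0 h1 h2 n).2.2.2 ha
  -- avoid sets
  set AvoidS : (List M₁ → List M₂) → List M₁ → ℕ → Set (List M₂) := fun prior u k =>
    (f '' {w ∈ G.tree | w.length = k} ∪ (fun m => runPrefix (sA₂ m) k) '' Set.Iio k)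
      ∪ (fun j => runPrefix (Sig (prior (u.take j))) k) '' Set.Iio k with hAvoidSdef
  have hAvoidFin : ∀ prior u k, (AvoidS prior u k).Finite := by
    intro prior u k
    apply Set.Finite.union
    apply Set.Finite.union
    · exact (level_finite G.isGameTree hGfin k).image f
    · exact (Set.finite_Iio k).image _
    · exact (Set.finite_Iio k).image _
  have hAvoidT : ∀ prior u k, AvoidS prior u k ⊆ G₂.tree := by
    intro prior u k
    rintro l ((⟨w, hw, rfl⟩ | ⟨m, _, rfl⟩) | ⟨j, _, rfl⟩)
    · exact hf.1.1 w hw.1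
    · exact G₂.payoff_subset (hsA₂mem m) k
    · exact G₂.payoff_subset (hSigA _) k
  have hAvoid_congr : ∀ (p p' : List M₁ → List M₂) u k,
      (∀ j < k, p (u.take j) = p' (u.take j)) → AvoidS p u k = AvoidS p' u k := by
    intro p p' u k h
    simp only [hAvoidSdef]
    congr 1
    apply Set.image_congr
    intro j hj
    rw [h j hj]
  -- the extension
  set dflt : (List M₁ → List M₂) → List M₁ → List M₂ := fun prior t =>
    chSeq (nextCh (prior t.dropLast)) (AvoidS prior t.dropLast t.length) (rank t) with hdfltdef
  set bl := buildLv G.tree f Mk pick nn Sig dflt with hbldef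
  set ftil : List M₁ → List M₂ := fun t => bl t.length t with hftildef
  have hftilnil : ftil [] = [] := rfl
  have hcoh : ∀ k (t : List M₁), t.length ≤ k → bl k t = ftil t := by
    intro k
    induction k with
    | zero =>
      intro t ht
      have h0 : t = [] := List.length_eq_zero_iff.mp (by omega)
      subst h0
      rfl
    | succ k ih =>
      intro t ht
      rcases Nat.lt_or_ge t.length (k+1) with h | h
      · have h1 : bl (k+1) t = bl k t := by
          rw [hbldef, buildLv_succ, if_pos (by omega)]
        rw [h1]
        exact ih t (by omega)
      · have hlen : t.length = k+1 := by omega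
        rw [hftildef]
        simp only
        rw [hlen]
  -- equations for ftil
  have heqG : ∀ t ∈ G.tree, ftil t = f t := by
    intro t ht
    rcases Nat.eq_zero_or_pos t.length with h0 | hpos
    · have ht0 : t = [] := List.length_eq_zero_iff.mp h0
      subst ht0
      rw [hftilnil]
      have h1 := hf.1.2.1 [] ht
      simp only [List.length_nil] at h1
      exact (List.length_eq_zero_iff.mp h1).symm
    · obtain ⟨k, hk⟩ : ∃ k, t.length = k + 1 := ⟨t.length - 1, by omega⟩
      have hL : ftil t = buildLv G.tree f Mk pick nn Sig dflt (k+1) t := by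
        rw [hftildef]; simp only; rw [hk, hbldef]
      rw [hL, buildLv_succ, if_neg (by omega), if_pos ht]
  have heqMk : ∀ t, t ∉ G.tree → ∀ h : Mk t,
      ftil t = runPrefix (Sig (ftil (t.take (nn (pick t h))))) t.length := by
    intro t hG h
    obtain ⟨hp1, hp2, hp3⟩ := hpick t h
    obtain ⟨k, hk⟩ : ∃ k, t.length = k + 1 := ⟨t.length - 1, by omega⟩
    have h1 : bl k (t.take (nn (pick t h))) = ftil (t.take (nn (pick t h))) := by
      apply hcoh
      rw [List.length_take]
      omega
    have hL : ftil t = buildLv G.tree f Mk pick nn Sig dflt (k+1) t := by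
      rw [hftildef]; simp only; rw [hk, hbldef]
    rw [hL, buildLv_succ, if_neg (by omega), if_neg hG, dif_pos h, ← hbldef, h1]
  have heqD : ∀ t : List M₁, t ∉ G.tree → ¬ Mk t → 1 ≤ t.length →
      ftil t = chSeq (nextCh (ftil t.dropLast))
        (AvoidS (fun w => ftil w) t.dropLast t.length) (rank t) := by
    intro t hG hM hlen
    obtain ⟨k, hk⟩ : ∃ k, t.length = k + 1 := ⟨t.length - 1, by omega⟩
    have hL : ftil t = buildLv G.tree f Mk pick nn Sig dflt (k+1) t := by
      rw [hftildef]; simp only; rw [hk, hbldef]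
    rw [hL, buildLv_succ, if_neg (by omega), if_neg hG, dif_neg hM, ← hbldef]
    rw [hdfltdef]
    simp only
    have hdl : bl k t.dropLast = ftil t.dropLast :=
      hcoh k _ (by rw [List.length_dropLast]; omega)
    rw [hdl, hAvoid_congr (bl k) (fun w => ftil w) t.dropLast t.length ?_]
    intro j hj
    apply hcoh
    rw [List.length_take, List.length_dropLast]
    omega
  -- chronological structure
  have hQ : ∀ k, ∀ t ∈ G₁.tree, t.length = k →
      ftil t ∈ G₂.tree ∧ (ftil t).length = t.length ∧
        ∀ j, ftil (t.take j) = (ftil t).take j := by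
    intro k
    induction k using Nat.strong_induction_on with
    | _ k IH =>
    intro t ht hlen
    rcases Nat.eq_zero_or_pos t.length with h0 | hpos
    · have ht0 : t = [] := List.length_eq_zero_iff.mp h0
      subst ht0
      refine ⟨by rw [hftilnil]; exact hroot2, by simp [hftilnil], ?_⟩
      intro j
      simp [hftilnil]
    · by_cases hG : t ∈ G.tree
      · have h1 : ftil t = f t := heqG t hG
        refine ⟨by rw [h1]; exact hf.1.1 t hG, by rw [h1]; exact hf.1.2.1 t hG, ?_⟩
        intro j
        have h2 : t.take j ∈ G.tree := G.isGameTree.1 t hG j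
        rw [heqG _ h2, h1]
        exact hf.1.2.2 t hG j
      · by_cases hM : Mk t
        · -- marked node
          obtain ⟨hp1, hp2, hp3⟩ := hpick t hM
          set R := pick t hM with hRdef
          have htl : (t.take (nn R)).length = nn R := by rw [List.length_take]; omega
          have hIHt := IH (nn R) (by omega) (t.take (nn R)) (G₁.isGameTree.1 t ht (nn R)) htl
          set V := ftil (t.take (nn R)) with hVdef
          have hV₂ : V ∈ G₂.tree := hIHt.1
          have hVlen : V.length = nn R := by rw [hVdef, hIHt.2.1, htl]
          have hSigV : runPrefix (Sig V) (nn R) = V := by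
            have := hSigpre V hV₂
            rwa [hVlen] at this
          have heq : ftil t = runPrefix (Sig V) t.length := heqMk t hG hM
          have h6 : ∀ j ≤ t.length, t.take j = runPrefix R j := by
            intro j hj
            rw [← hp2, runPrefix_take_of_le _ hj]
          refine ⟨?_, ?_, ?_⟩
          · rw [heq]; exact G₂.payoff_subset (hSigA V) t.length
          · rw [heq, length_runPrefix]
          · intro j
            rcases Nat.lt_or_ge j t.length with hj | hj
            · have hRHS : (ftil t).take j = runPrefix (Sig V) j := by
                rw [heq, runPrefix_take_of_le _ (by omega)]
              rw [hRHS]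
              rcases Nat.lt_trichotomy j (nn R) with hlt | heqj | hgt
              · have h5 : t.take j = (t.take (nn R)).take j := by
                  rw [List.take_take, min_eq_left (by omega)]
                rw [h5, hIHt.2.2 j]
                have h5' := runPrefix_take_of_le (Sig V) (le_of_lt hlt)
                rw [hSigV] at h5'
                exact h5'
              · subst heqj
                exact hSigV.symm
              · have h7 : (t.take j).length = j := by rw [List.length_take]; omega
                have hMkj : Mk (t.take j) :=
                  ⟨R, hp1, by rw [h7, h6 j (by omega)], by rw [h7]; omega⟩
                have hGj : t.take j ∉ G.tree := by
                  rw [h6 j (by omega)]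
                  exact hdG R hp1 j (by have := hnn_dG R; omega)
                have h8 := heqMk (t.take j) hGj hMkj
                have h9 : pick (t.take j) hMkj = R :=
                  hpick_eq _ _ R hp1 (by rw [h7, h6 j (by omega)]) (by rw [h7]; omega)
                rw [h9] at h8
                have h10 : (t.take j).take (nn R) = t.take (nn R) := by
                  rw [List.take_take, min_eq_left (by omega)]
                rw [h10] at h8
                rw [h8, h7]
            · rw [List.take_of_length_le (by omega),
                List.take_of_length_le (by rw [heq, length_runPrefix]; omega)]
        · -- default node
          have hu : t.dropLast ∈ G₁.tree := by
            rw [List.dropLast_eq_take]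
            exact G₁.isGameTree.1 t ht _
          have hulen : t.dropLast.length = t.length - 1 := by
            rw [List.length_dropLast]
          have hIHu := IH (t.length - 1) (by omega) t.dropLast hu hulen
          set u := t.dropLast with hudef
          set Vp := ftil u with hVpdef
          have hVp₂ : Vp ∈ G₂.tree := hIHu.1
          have hVplen : Vp.length = t.length - 1 := by rw [hVpdef, hIHu.2.1, hulen]
          have heq := heqD t hG hM (by omega)
          have hFfin := hAvoidFin (fun w => ftil w) u t.length
          have hFT := hAvoidT (fun w => ftil w) u t.length
          have hs := hchSeq Vp hVp₂ _ hFfin hFT (rank t)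
          refine ⟨by rw [heq]; exact hs.2.2.1, by rw [heq, hs.1, hVplen]; omega, ?_⟩
          intro j
          rcases Nat.lt_or_ge j t.length with hj | hj
          · have hju : t.take j = u.take j := by
              rw [hudef, List.dropLast_eq_take, List.take_take, min_eq_left (by omega)]
            have h1 : ftil (t.take j) = Vp.take j := by rw [hju, hIHu.2.2 j]
            have hjVp : j ≤ Vp.length := by omega
            have h2 : (ftil t).take j = Vp.take j := by
              have h3 := hs.2.1
              rw [heq]
              conv_rhs => rw [← h3]
              rw [List.take_take, min_eq_left hjVp]
            rw [h1, h2]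
          · rw [List.take_of_length_le (by omega),
              List.take_of_length_le (by rw [heq, hs.1, hVplen]; omega)]
  -- injectivity
  have hInj : ∀ k, ∀ t ∈ G₁.tree, ∀ s ∈ G₁.tree, t.length = k → s.length = k →
      ftil t = ftil s → t = s := by
    intro k
    induction k using Nat.strong_induction_on with
    | _ k IH =>
    intro t ht s hs hlt hls hfeq
    rcases Nat.eq_zero_or_pos k with h0 | hpos
    · subst h0
      rw [List.length_eq_zero_iff.mp hlt, List.length_eq_zero_iff.mp hls]
    · obtain ⟨K, hK⟩ : ∃ K, k = K + 1 := ⟨k - 1, by omega⟩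
      subst hK
      have hpar : t.take K = s.take K := by
        apply IH K (by omega) _ (G₁.isGameTree.1 t ht K) _ (G₁.isGameTree.1 s hs K)
          (by rw [List.length_take]; omega) (by rw [List.length_take]; omega)
        rw [(hQ _ t ht rfl).2.2 K, (hQ _ s hs rfl).2.2 K, hfeq]
      set u := t.take K with hudef
      have hulen : u.length = K := by rw [hudef, List.length_take]; omega
      have hu1 : u ∈ G₁.tree := G₁.isGameTree.1 t ht K
      have htdl : t.dropLast = u := by
        rw [List.dropLast_eq_take, hlt, Nat.add_sub_cancel]
      have hsdl : s.dropLast = u := by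
        rw [List.dropLast_eq_take, hls, Nat.add_sub_cancel]
        exact hpar.symm
      have hfu₂ : ftil u ∈ G₂.tree := (hQ K u hu1 hulen).1
      have hF0fin := hAvoidFin (fun z => ftil z) u (K+1)
      have hF0T := hAvoidT (fun z => ftil z) u (K+1)
      -- facts about marked nodes at this level
      have hfixM : ∀ w, w ∈ G₁.tree → w.length = K+1 → w.take K = u → w ∉ G.tree →
          ∀ hw : Mk w, (pick w hw ∈ Des ∧ runPrefix (pick w hw) (K+1) = w ∧
              nn (pick w hw) ≤ K) ∧ u ∉ G.tree ∧
            ftil w = runPrefix (Sig (ftil (u.take (nn (pick w hw))))) (K+1) := by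
        intro w hw1 hwlen hwtake hwG hw
        obtain ⟨p1, p2, p3⟩ := hpick w hw
        rw [hwlen] at p2 p3
        have hnnK : nn (pick w hw) ≤ K := by omega
        refine ⟨⟨p1, p2, hnnK⟩, ?_, ?_⟩
        · have h1 : u = runPrefix (pick w hw) K := by
            rw [← hwtake]
            conv_lhs => rw [← p2]
            rw [runPrefix_take_of_le _ (by omega)]
          rw [h1]
          exact hdG _ p1 K (by have := hnn_dG (pick w hw); omega)
        · have h2 := heqMk w hwG hw
          rw [hwlen] at h2
          have h3 : w.take (nn (pick w hw)) = u.take (nn (pick w hw)) := by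
            rw [← hwtake, List.take_take, min_eq_left hnnK]
          rwa [h3] at h2
      -- facts about default nodes at this level
      have hfixD : ∀ w, w ∈ G₁.tree → w.length = K+1 → w.dropLast = u → w ∉ G.tree →
          ¬ Mk w → ftil w =
              chSeq (nextCh (ftil u)) (AvoidS (fun z => ftil z) u (K+1)) (rank w) ∧
            ftil w ∉ AvoidS (fun z => ftil z) u (K+1) := by
        intro w hw1 hwlen hwdl hwG hwM
        have h1 := heqD w hwG hwM (by omega)
        rw [hwdl, hwlen] at h1
        refine ⟨h1, ?_⟩
        intro hmem
        have h2 := (hchSeq (ftil u) hfu₂ _ hF0fin hF0T (rank w)).2.2.2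
        rw [← h1] at h2
        exact h2 (chSt_base _ _ (rank w) hmem)
      by_cases hGt : t ∈ G.tree <;> by_cases hGs : s ∈ G.tree
      · exact hf.2.1 t hGt s hGs (by rw [← heqG t hGt, ← heqG s hGs, hfeq])
      · -- t in G, s not
        have huG : u ∈ G.tree := G.isGameTree.1 t hGt K
        by_cases hMs : Mk s
        · exact absurd huG (hfixM s hs hls hpar.symm hGs hMs).2.1
        · exfalso
          have hd := hfixD s hs hls hsdl hGs hMs
          apply hd.2
          rw [← hfeq, heqG t hGt]
          exact Or.inl (Or.inl ⟨t, ⟨hGt, hlt⟩, rfl⟩)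
      · -- s in G, t not
        have huG : u ∈ G.tree := by
          have hx := G.isGameTree.1 s hGs K
          rwa [← hpar] at hx
        by_cases hMt : Mk t
        · exact absurd huG (hfixM t ht hlt rfl hGt hMt).2.1
        · exfalso
          have hd := hfixD t ht hlt htdl hGt hMt
          apply hd.2
          rw [hfeq, heqG s hGs]
          exact Or.inl (Or.inl ⟨s, ⟨hGs, hls⟩, rfl⟩)
      · -- neither in G
        by_cases hMt : Mk t <;> by_cases hMs : Mk s
        · -- both marked
          have h1 := hfixM t ht hlt rfl hGt hMt
          have h2 := hfixM s hs hls hpar.symm hGs hMs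
          have ha : runPrefix (pick t hMt) K = u := by
            rw [← runPrefix_take_of_le (pick t hMt) (show K ≤ K+1 by omega), h1.1.2.1]
          have hb : runPrefix (pick s hMs) K = u := by
            rw [← runPrefix_take_of_le (pick s hMs) (show K ≤ K+1 by omega), h2.1.2.1]
            exact hpar.symm
          have h3 : pick t hMt = pick s hMs := by
            apply huniq _ h1.1.1 _ h2.1.1 K h1.1.2.2 h2.1.2.2
            rw [ha, hb]
          rw [← h1.1.2.1, ← h2.1.2.1, h3]
        · -- t marked, s default
          exfalso
          have h1 := hfixM t ht hlt rfl hGt hMt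
          have h2 := hfixD s hs hls hsdl hGs hMs
          apply h2.2
          rw [← hfeq, h1.2.2]
          exact Or.inr ⟨nn (pick t hMt), by simp only [Set.mem_Iio]; omega, rfl⟩
        · -- t default, s marked
          exfalso
          have h1 := hfixM s hs hls hpar.symm hGs hMs
          have h2 := hfixD t ht hlt htdl hGt hMt
          apply h2.2
          rw [hfeq, h1.2.2]
          exact Or.inr ⟨nn (pick s hMs), by simp only [Set.mem_Iio]; omega, rfl⟩
        · -- both default
          have h1 := hfixD t ht hlt htdl hGt hMt
          have h2 := hfixD s hs hls hsdl hGs hMs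
          have h3 : rank t = rank s := by
            apply hchSeqInj (ftil u) hfu₂ _ hF0fin hF0T
            rw [← h1.1, ← h2.1, hfeq]
          exact hrankInj t ht s hs h3
  -- payoff condition
  have hpay : ∀ R ∈ Runs G₁.tree, ∀ S, BarMapsTo ftil R S →
      (R ∈ G₁.payoff ↔ S ∈ G₂.payoff) := by
    intro R hR S hbar
    by_cases hRG : R ∈ Runs G.tree
    · have hfbar : BarMapsTo f R S := by
        intro n
        rw [hbar n, heqG _ (hRG n)]
      have hiff := hf.2.2 R hRG S hfbar
      rw [hpayG] at hiff
      constructor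
      · intro hA; exact hiff.mp ⟨hA, hRG⟩
      · intro hS; exact (hiff.mpr hS).1
    · by_cases hRA : R ∈ G₁.payoff
      · -- designated run
        have hDesR : R ∈ Des := ⟨hRA, hRG⟩
        set V := ftil (runPrefix R (nn R)) with hVdef
        have hV₂ : V ∈ G₂.tree := (hQ (nn R) _ (hR (nn R)) (length_runPrefix _ _)).1
        have hVlen : V.length = nn R := by
          rw [hVdef, (hQ (nn R) _ (hR (nn R)) (length_runPrefix _ _)).2.1, length_runPrefix]
        have hSigV : runPrefix (Sig V) (nn R) = V := by
          have := hSigpre V hV₂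
          rwa [hVlen] at this
        have hSeq : ∀ k, nn R + 1 ≤ k → ftil (runPrefix R k) = runPrefix (Sig V) k := by
          intro k hk
          have hnotG : runPrefix R k ∉ G.tree :=
            hdG R hDesR k (by have := hnn_dG R; omega)
          have hMkk : Mk (runPrefix R k) :=
            ⟨R, hDesR, by rw [length_runPrefix], by rw [length_runPrefix]; omega⟩
          have h := heqMk (runPrefix R k) hnotG hMkk
          have hpickR : pick _ hMkk = R :=
            hpick_eq _ _ R hDesR (by rw [length_runPrefix]) (by rw [length_runPrefix]; omega)
          rw [hpickR] at h
          rw [length_runPrefix] at h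
          rwa [runPrefix_take_of_le _ (by omega)] at h
        have hSeq' : S = Sig V := by
          apply run_ext
          intro m
          refine ⟨max m (nn R + 1), le_max_left _ _, ?_⟩
          rw [hbar _, hSeq _ (le_max_right _ _)]
        constructor
        · intro _; rw [hSeq']; exact hSigA V
        · intro _; exact hRA
      · -- generic run
        suffices hS : S ∉ G₂.payoff by exact iff_of_false hRA hS
        intro hSA
        obtain ⟨m, hm⟩ := hsA₂all S hSA
        have hdGex : ∃ K₀ : ℕ, ∀ k, K₀ ≤ k → runPrefix R k ∉ G.tree := by
          have hex : ∃ m', runPrefix R m' ∉ G.tree := by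
            by_contra hc
            push_neg at hc
            exact hRG hc
          obtain ⟨m', hm'⟩ := hex
          refine ⟨m', fun k hk hmem => hm' ?_⟩
          have := G.isGameTree.1 _ hmem m'
          rwa [runPrefix_take_of_le _ hk] at this
        obtain ⟨K₀, hK₀⟩ := hdGex
        have hdef : ∃ k : ℕ, m ≤ k ∧ K₀ ≤ k ∧ ¬ Mk (runPrefix R (k+1)) := by
          by_contra hc
          push_neg at hc
          set K₁ := max m K₀ with hK₁
          have hmk : ∀ k, K₁ ≤ k → Mk (runPrefix R (k+1)) := by
            intro k hk
            exact hc k (le_trans (le_max_left _ _) hk) (le_trans (le_max_right _ _) hk)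
          obtain ⟨D, hD, hDpre, hDnn⟩ := hmk K₁ (le_refl _)
          rw [length_runPrefix] at hDpre hDnn
          have hDneR : D ≠ R := fun h => hRA (h ▸ hD).1
          set k' := dd D R with hk'def
          have hk'1 : D k' ≠ R k' := hdd D R hDneR
          have hk'' : K₁ + 1 ≤ k' := hagree_dd D R (K₁+1) hDneR hDpre
          obtain ⟨D', hD', hD'pre, hD'nn⟩ := hmk k' (by omega)
          rw [length_runPrefix] at hD'pre hD'nn
          have hDD' : D ≠ D' := by
            intro h
            apply hk'1
            rw [h]
            exact runPrefix_eq_iff.mp hD'pre k' (by omega)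
          have hagree' : ∀ j, j < k' → D j = D' j := by
            intro j hj
            have h1 : D j = R j := hdd_min D R j hj
            have h2 : D' j = R j := runPrefix_eq_iff.mp hD'pre j (by omega)
            rw [h1, h2]
          rcases Nat.lt_or_ge (ι' D) (ι' D') with hlt | hge
          · have h1 : dd D' D < nn D' := hnn_dd D' D hD hDD' hlt
            have h2 : k' ≤ dd D' D := by
              apply hagree_dd D' D k' (fun h => hDD' h.symm)
              rw [runPrefix_eq_iff]
              intro j hj
              exact (hagree' j hj).symm
            omega
          · have hιne : ι' D ≠ ι' D' := fun h => hDD' (hι'inj D hD D' hD' h)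
            have hlt' : ι' D' < ι' D := by omega
            have h1 : dd D D' < nn D := hnn_dd D D' hD' hDD'.symm hlt'
            have h2 : k' ≤ dd D D' := by
              apply hagree_dd D D' k' hDD'
              rw [runPrefix_eq_iff]
              exact hagree'
            omega
        obtain ⟨k, hkm, hkK₀, hkMk⟩ := hdef
        have hnotG := hK₀ (k+1) (by omega)
        have h := heqD (runPrefix R (k+1)) hnotG hkMk (by rw [length_runPrefix]; omega)
        rw [length_runPrefix] at h
        have hdlp : (runPrefix R (k+1)).dropLast = runPrefix R k := by
          rw [runPrefix_succ, List.dropLast_concat]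
        rw [hdlp] at h
        have hu₂ : ftil (runPrefix R k) ∈ G₂.tree := (hQ k _ (hR k) (length_runPrefix _ _)).1
        have hF0fin := hAvoidFin (fun w => ftil w) (runPrefix R k) (k+1)
        have hF0T := hAvoidT (fun w => ftil w) (runPrefix R k) (k+1)
        have havoid : ftil (runPrefix R (k+1)) ∉
            AvoidS (fun w => ftil w) (runPrefix R k) (k+1) := by
          intro hmem
          have h2 := (hchSeq (ftil (runPrefix R k)) hu₂ _ hF0fin hF0T
            (rank (runPrefix R (k+1)))).2.2.2
          rw [← h] at h2
          exact h2 (chSt_base _ _ _ hmem)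
        apply havoid
        have h3 : ftil (runPrefix R (k+1)) = runPrefix (sA₂ m) (k+1) := by
          rw [← hbar (k+1), hm]
        rw [h3]
        exact Or.inl (Or.inr ⟨m, by simp only [Set.mem_Iio]; omega, rfl⟩)
  refine ⟨ftil, ⟨⟨?_, ?_, ?_⟩, ?_, hpay⟩, heqG⟩
  · intro t ht
    exact (hQ t.length t ht rfl).1
  · intro t ht
    exact (hQ t.length t ht rfl).2.1
  · intro t ht k
    exact (hQ t.length t ht rfl).2.2 k
  · intro t ht s hs hts
    have hlen : t.length = s.length := by
      rw [← (hQ t.length t ht rfl).2.1, ← (hQ s.length s hs rfl).2.1, hts]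
    exact hInj t.length t ht s hs rfl hlen.symm hts
end FraisseGames
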